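/- Let f : ℝ → ℝ be an SD map. Then f maps positive reals to positive reals (f(x) > 0 whenever x > 0) and f is strictly increasing: a > b implies f(a) > f(b). -/

import Mathlib

/-- A function `f : F → F` on a field `F` is an *SD map* if for all `x ≠ y` one has
`f x ≠ f y` and `f ((x+y)/(x-y)) = (f x + f y) / (f x - f y)`. -/
def IsSDMap {F : Type*} [Field F] (f : F → F) : Prop :=
  ∀ ⦃x y : F⦄, x ≠ y →
    f x ≠ f y ∧ f ((x + y) / (x - y)) = (f x + f y) / (f x - f y)

theorem sd_map_real_pos_and_strictMono (f : ℝ → ℝ) (hf : IsSDMap f) :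
    (∀ x : ℝ, 0 < x → 0 < f x) ∧ (∀ a b : ℝ, a > b → f a > f b) := by
  have inj : ∀ ⦃x y : ℝ⦄, x ≠ y → f x ≠ f y := fun x y h => (hf h).1
  -- f 1 = 1 and f 0 = 0
  have h10 := (hf (show (1:ℝ) ≠ 0 by norm_num)).2
  have h20 := (hf (show (2:ℝ) ≠ 0 by norm_num)).2
  norm_num at h10 h20
  have d1 : f 1 - f 0 ≠ 0 := sub_ne_zero.mpr (inj one_ne_zero)
  have d2 : f 2 - f 0 ≠ 0 := sub_ne_zero.mpr (inj two_ne_zero)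
  have d21 : f 2 - f 1 ≠ 0 := sub_ne_zero.mpr (inj (by norm_num))
  rw [eq_div_iff d1] at h10
  rw [eq_div_iff d2] at h20
  have hf1 : f 1 = 1 := by
    have key : (f 1 - 1) * (f 2 - f 1) = 0 := by nlinarith [h10, h20]
    rcases mul_eq_zero.mp key with h | h
    · linarith
    · exact absurd h d21
  have hf0 : f 0 = 0 := by nlinarith [h10, hf1]
  -- multiplicative relation
  have mulrel : ∀ T S : ℝ, T ≠ 0 → S ≠ 0 → S ≠ 1 → S ≠ -1 →
      f (T * S) = f (T / S) * f (S ^ 2) := by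
    intro T S hT hS0 hS1 hSm1
    have hs2 : (S:ℝ) ^ 2 ≠ 1 := by
      intro h
      have : (S - 1) * (S + 1) = 0 := by linear_combination h
      rcases mul_eq_zero.mp this with h' | h'
      · exact hS1 (by linarith)
      · exact hSm1 (by linarith)
    have hne : T * S ≠ T / S := by
      intro h
      rw [eq_div_iff hS0] at h
      have : T * (S - 1) * (S + 1) = 0 := by linear_combination h
      rcases mul_eq_zero.mp this with h' | h'
      · rcases mul_eq_zero.mp h' with h'' | h''
        · exact hT h''
        · exact hS1 (by linarith)
      · exact hSm1 (by linarith)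
    have e1 := (hf hne).2
    have e2 := (hf hs2).2
    have harg : (T * S + T / S) / (T * S - T / S) = (S ^ 2 + 1) / (S ^ 2 - 1) := by
      rw [div_eq_div_iff (sub_ne_zero.mpr hne) (sub_ne_zero.mpr hs2)]
      field_simp
    rw [harg, e2, hf1] at e1
    have dA : f (T * S) - f (T / S) ≠ 0 := sub_ne_zero.mpr (inj hne)
    have dc : f (S ^ 2) - 1 ≠ 0 := by
      rw [← hf1]; exact sub_ne_zero.mpr (inj hs2)
    rw [div_eq_div_iff dc dA] at e1
    linear_combination e1 / 2
  -- f ((S^2)^2) = f (S^2) ^ 2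
  have sqrel : ∀ S : ℝ, S ≠ 0 → S ≠ 1 → S ≠ -1 → f ((S ^ 2) ^ 2) = f (S ^ 2) * f (S ^ 2) := by
    intro S hS0 hS1 hSm1
    have h := mulrel (S ^ 3) S (pow_ne_zero 3 hS0) hS0 hS1 hSm1
    have e1 : S ^ 3 * S = (S ^ 2) ^ 2 := by ring
    have e2 : S ^ 3 / S = S ^ 2 := by field_simp
    rw [e1, e2] at h
    exact h
  -- positivity
  have pos : ∀ x : ℝ, 0 < x → 0 < f x := by
    intro x hx
    rcases eq_or_ne x 1 with h | h
    · rw [h, hf1]; norm_num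
    · set S := Real.sqrt (Real.sqrt x) with hSdef
      have hsx : 0 < Real.sqrt x := Real.sqrt_pos.mpr hx
      have hS0 : 0 < S := Real.sqrt_pos.mpr hsx
      have hS2 : S ^ 2 = Real.sqrt x := Real.sq_sqrt hsx.le
      have hS4 : (S ^ 2) ^ 2 = x := by rw [hS2]; exact Real.sq_sqrt hx.le
      have hS1 : S ≠ 1 := by
        intro hS
        apply h
        rw [← hS4, hS]; norm_num
      have hSm1 : S ≠ -1 := by linarith
      have hq := sqrel S (ne_of_gt hS0) hS1 hSm1
      rw [hS4] at hq
      have hne0 : f x ≠ 0 := by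
        rw [← hf0]; exact inj (ne_of_gt hx)
      have : 0 ≤ f x := hq ▸ mul_self_nonneg _
      exact lt_of_le_of_ne this (Ne.symm hne0)
  -- oddness
  have odd : ∀ t : ℝ, f (-t) = - f t := by
    intro t
    rcases eq_or_ne t 1 with h | h
    · have e := (hf (show (0:ℝ) ≠ 1 by norm_num)).2
      norm_num [hf0, hf1] at e
      rw [h, hf1, e]
    · have ht1 : t - 1 ≠ 0 := sub_ne_zero.mpr h
      set x := (t + 1) / (t - 1) with hxdef
      have hx1 : x ≠ 1 := by
        intro hx
        rw [hxdef, div_eq_one_iff_eq ht1] at hx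
        linarith
      have e1 := (hf hx1).2
      have e2 := (hf (Ne.symm hx1)).2
      have hx1' : x - 1 ≠ 0 := sub_ne_zero.mpr hx1
      have hx1'' : (1 : ℝ) - x ≠ 0 := fun hh => hx1' (by linarith)
      have arg1 : (x + 1) / (x - 1) = t := by
        rw [div_eq_iff hx1', hxdef]
        field_simp
        ring
      have arg2 : (1 + x) / (1 - x) = -t := by
        rw [div_eq_iff hx1'', hxdef]
        field_simp
        ring
      rw [arg1, hf1] at e1
      rw [arg2, hf1] at e2
      have hfx1 : f x - 1 ≠ 0 := by
        rw [← hf1]; exact sub_ne_zero.mpr (inj hx1)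
      rw [e1, e2]
      have h1mfx : (1 : ℝ) - f x ≠ 0 := fun hh => hfx1 (by linarith)
      field_simp
      ring
  -- t > 1 → f t > 1
  have gt1 : ∀ t : ℝ, 1 < t → 1 < f t := by
    intro t ht
    have ht1 : t ≠ 1 := ne_of_gt ht
    have e := (hf ht1).2
    rw [hf1] at e
    have hargpos : 0 < (t + 1) / (t - 1) := div_pos (by linarith) (by linarith)
    have h1 := pos _ hargpos
    rw [e] at h1
    have hft : 0 < f t := pos t (by linarith)
    have hne : f t - 1 ≠ 0 := by rw [← hf1]; exact sub_ne_zero.mpr (inj ht1)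
    by_contra hle
    push_neg at hle
    have : f t - 1 < 0 := lt_of_le_of_ne (by linarith) hne
    have : (f t + 1) / (f t - 1) < 0 := div_neg_of_pos_of_neg (by linarith) this
    linarith
  -- monotonicity on positives
  have pmono : ∀ a b : ℝ, 0 < b → b < a → f b < f a := by
    intro a b hb hba
    have hne : a ≠ b := ne_of_gt hba
    have e := (hf hne).2
    have hs : 1 < (a + b) / (a - b) := by
      rw [one_lt_div (by linarith)]; linarith
    have h1 := gt1 _ hs
    rw [e] at h1
    have hfa : 0 < f a := pos a (by linarith)
    have hfb : 0 < f b := pos b hb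
    have hne' : f a - f b ≠ 0 := sub_ne_zero.mpr (inj hne)
    by_contra hle
    push_neg at hle
    have : f a - f b < 0 := lt_of_le_of_ne (by linarith) hne'
    have : (f a + f b) / (f a - f b) < 0 := div_neg_of_pos_of_neg (by linarith) this
    linarith
  refine ⟨pos, ?_⟩
  intro a b hab
  rcases lt_trichotomy b 0 with hb | hb | hb
  · rcases lt_trichotomy a 0 with ha | ha | ha
    · have h := pmono (-b) (-a) (by linarith) (by linarith)
      rw [odd, odd] at h
      linarith
    · have hfb : f (-b) = - f b := odd b
      have : 0 < f (-b) := pos _ (by linarith)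
      rw [ha, hf0]
      linarith
    · have hfb : f (-b) = - f b := odd b
      have h1 : 0 < f (-b) := pos _ (by linarith)
      have h2 : 0 < f a := pos a ha
      linarith
  · rw [hb, hf0]
    exact pos a (by linarith)
  · exact pmono a b hb hab
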